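/- Let (A, X, I) be a formal context with X finite, let m₁, m₂ be mass functions on X, and let β ∈ [0,1]. Then for every B ⊆ A: (1) if B ∈ ℙ(m₁ ∩ m₂, β), then B ∈ ℙ(m₁, β) and B ∈ ℙ(m₂, β); (2) if B ∈ ℙ(m₁, β) or B ∈ ℙ(m₂, β), then B ∈ ℙ(m₁ ∪ m₂, β). Here m₁ ∩ m₂ is the unnormalized conjunctive (Dempster) combination and m₁ ∪ m₂ the disjunctive combination. -/
import Mathlib


/-- `Y`-restricted upward derivation operator of a formal context `(A, X, I)`:
`B↑_Y = {x ∈ Y | ∀ a ∈ B, (a,x) ∈ I}`. -/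
def fcaUp {A X : Type*} (I : Set (A × X)) (Y : Set X) (B : Set A) : Set X :=
  {x ∈ Y | ∀ a ∈ B, (a, x) ∈ I}

/-- Downward derivation operator: `Z↓ = {a ∈ A | ∀ x ∈ Z, (a,x) ∈ I}`. -/
def fcaDown {A X : Type*} (I : Set (A × X)) (Z : Set X) : Set A :=
  {a | ∀ x ∈ Z, (a, x) ∈ I}

/-- `B ⊆ A` is Galois-stable with respect to `Y ⊆ X` if `(B↑_Y)↓ = B`. -/
def GaloisStable {A X : Type*} (I : Set (A × X)) (Y : Set X) (B : Set A) : Prop :=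
  fcaDown I (fcaUp I Y B) = B

/-- A (Dempster–Shafer) mass function on a finite set `X`: a nonnegative real-valued
function on subsets of `X` summing to `1`. -/
def IsMassFunction {X : Type*} [Fintype X] (m : Finset X → ℝ) : Prop :=
  (∀ Y, 0 ≤ m Y) ∧ (∑ Y : Finset X, m Y = 1)

open scoped Classical in
/-- The stability index of `G ⊆ A`:
`ρ_m(G) = Σ { m(Y) : Y ⊆ X such that G is Galois-stable w.r.t. Y }`. -/
noncomputable def stabilityIndex {A X : Type*} [Fintype X] (I : Set (A × X))
    (m : Finset X → ℝ) (G : Set A) : ℝ :=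
  ∑ Y : Finset X, if GaloisStable I (↑Y : Set X) G then m Y else 0

/-- The β-categorization `ℙ(m, β) = { (G↑_X)↓ : G ⊆ A with ρ_m(G) ≥ β }`. -/
noncomputable def betaCategorization {A X : Type*} [Fintype X] (I : Set (A × X))
    (m : Finset X → ℝ) (β : ℝ) : Set (Set A) :=
  {B | ∃ G : Set A, β ≤ stabilityIndex I m G ∧ fcaDown I (fcaUp I Set.univ G) = B}

/-- The up-set restricted order: `m₁ ≤_↑ m₂` iff for every upward closed family `𝒱`
of subsets of `X`, `Σ_{Y ∈ 𝒱} m₁(Y) ≤ Σ_{Y ∈ 𝒱} m₂(Y)`. -/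
def upLE {X : Type*} [Fintype X] (m₁ m₂ : Finset X → ℝ) : Prop :=
  ∀ V : Finset (Finset X), (∀ Y ∈ V, ∀ Z : Finset X, Y ⊆ Z → Z ∈ V) →
    (∑ Y ∈ V, m₁ Y) ≤ ∑ Y ∈ V, m₂ Y

/-- Unnormalized conjunctive (Dempster) combination:
`(m₁ ∩ m₂)(Y) = Σ_{Y₁ ∩ Y₂ = Y} m₁(Y₁)·m₂(Y₂)`. -/
def conjComb {X : Type*} [Fintype X] [DecidableEq X] (m₁ m₂ : Finset X → ℝ)
    (Y : Finset X) : ℝ :=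
  ∑ p : Finset X × Finset X, if p.1 ∩ p.2 = Y then m₁ p.1 * m₂ p.2 else 0

/-- Disjunctive combination: `(m₁ ∪ m₂)(Y) = Σ_{Y₁ ∪ Y₂ = Y} m₁(Y₁)·m₂(Y₂)`. -/
def disjComb {X : Type*} [Fintype X] [DecidableEq X] (m₁ m₂ : Finset X → ℝ)
    (Y : Finset X) : ℝ :=
  ∑ p : Finset X × Finset X, if p.1 ∪ p.2 = Y then m₁ p.1 * m₂ p.2 else 0

lemma galoisStable_mono {A X : Type*} (I : Set (A × X)) {Y Z : Set X} {G : Set A}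
    (hYZ : Y ⊆ Z) (h : GaloisStable I Y G) : GaloisStable I Z G := by
  unfold GaloisStable at *
  apply Set.Subset.antisymm
  · intro a ha
    rw [← h]
    intro x hx
    exact ha x ⟨hYZ hx.1, hx.2⟩
  · intro a ha x hx
    exact hx.2 a ha

open scoped Classical in
lemma stabIdx_double {A X : Type*} [Fintype X] [DecidableEq X] (I : Set (A × X))
    (m₁ m₂ : Finset X → ℝ) (G : Set A) (op : Finset X → Finset X → Finset X) :
    (∑ Y : Finset X, if GaloisStable I (↑Y : Set X) G then
        (∑ p : Finset X × Finset X, if op p.1 p.2 = Y then m₁ p.1 * m₂ p.2 else 0) else 0)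
    = ∑ p : Finset X × Finset X,
        if GaloisStable I (↑(op p.1 p.2) : Set X) G then m₁ p.1 * m₂ p.2 else 0 := by
  have h1 : ∀ Y : Finset X, (if GaloisStable I (↑Y : Set X) G then
      (∑ p : Finset X × Finset X, if op p.1 p.2 = Y then m₁ p.1 * m₂ p.2 else 0) else 0)
      = ∑ p : Finset X × Finset X,
        if op p.1 p.2 = Y then (if GaloisStable I (↑Y : Set X) G then m₁ p.1 * m₂ p.2 else 0)
        else 0 := by
    intro Y
    split_ifs with h
    · rfl
    · simp
  simp only [h1]
  rw [Finset.sum_comm]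
  apply Finset.sum_congr rfl
  intro p _
  have := Finset.sum_ite_eq Finset.univ (op p.1 p.2)
    (fun Y => if GaloisStable I (↑Y : Set X) G then m₁ p.1 * m₂ p.2 else 0)
  simpa using this

open scoped Classical in
lemma stabIdx_factor₁ {A X : Type*} [Fintype X] [DecidableEq X] (I : Set (A × X))
    (m₁ m₂ : Finset X → ℝ) (h₂ : IsMassFunction m₂) (G : Set A) :
    (∑ p : Finset X × Finset X,
        if GaloisStable I (↑p.1 : Set X) G then m₁ p.1 * m₂ p.2 else 0)
    = stabilityIndex I m₁ G := by
  rw [Fintype.sum_prod_type]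
  unfold stabilityIndex
  apply Finset.sum_congr rfl
  intro Y _
  split_ifs with h
  · simp only [h, if_true]
    rw [← Finset.mul_sum, h₂.2, mul_one]
  · simp [h]

open scoped Classical in
lemma stabIdx_factor₂ {A X : Type*} [Fintype X] [DecidableEq X] (I : Set (A × X))
    (m₁ m₂ : Finset X → ℝ) (h₁ : IsMassFunction m₁) (G : Set A) :
    (∑ p : Finset X × Finset X,
        if GaloisStable I (↑p.2 : Set X) G then m₁ p.1 * m₂ p.2 else 0)
    = stabilityIndex I m₂ G := by
  rw [Fintype.sum_prod_type_right]
  unfold stabilityIndex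
  apply Finset.sum_congr rfl
  intro Y _
  split_ifs with h
  · simp only [h, if_true]
    rw [← Finset.sum_mul, h₁.2, one_mul]
  · simp [h]

/-- (1) `B ∈ ℙ(m₁ ∩ m₂, β)` implies `B ∈ ℙ(m₁, β)` and `B ∈ ℙ(m₂, β)`;
(2) `B ∈ ℙ(m₁, β)` or `B ∈ ℙ(m₂, β)` implies `B ∈ ℙ(m₁ ∪ m₂, β)`. -/
theorem betaCategorization_conj_disj {A X : Type*} [Fintype X] [DecidableEq X]
    (I : Set (A × X)) (m₁ m₂ : Finset X → ℝ)
    (h₁ : IsMassFunction m₁) (h₂ : IsMassFunction m₂)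
    (β : ℝ) (h0 : 0 ≤ β) (hβ1 : β ≤ 1) (B : Set A) :
    (B ∈ betaCategorization I (conjComb m₁ m₂) β →
      B ∈ betaCategorization I m₁ β ∧ B ∈ betaCategorization I m₂ β) ∧
    ((B ∈ betaCategorization I m₁ β ∨ B ∈ betaCategorization I m₂ β) →
      B ∈ betaCategorization I (disjComb m₁ m₂) β) := by
  classical
  have hconj₁ : ∀ G : Set A,
      stabilityIndex I (conjComb m₁ m₂) G ≤ stabilityIndex I m₁ G := by
    intro G
    calc stabilityIndex I (conjComb m₁ m₂) G
        = ∑ p : Finset X × Finset X,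
            if GaloisStable I (↑(p.1 ∩ p.2) : Set X) G then m₁ p.1 * m₂ p.2 else 0 := by
          unfold stabilityIndex conjComb
          exact stabIdx_double I m₁ m₂ G (· ∩ ·)
      _ ≤ ∑ p : Finset X × Finset X,
            if GaloisStable I (↑p.1 : Set X) G then m₁ p.1 * m₂ p.2 else 0 := by
          apply Finset.sum_le_sum
          intro p _
          split_ifs with h h' h'
          · exact le_refl _
          · exact absurd (galoisStable_mono I (by simp [Set.inter_subset_left]) h) h'
          · exact mul_nonneg (h₁.1 _) (h₂.1 _)
          · exact le_refl _
      _ = stabilityIndex I m₁ G := stabIdx_factor₁ I m₁ m₂ h₂ G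
  have hconj₂ : ∀ G : Set A,
      stabilityIndex I (conjComb m₁ m₂) G ≤ stabilityIndex I m₂ G := by
    intro G
    calc stabilityIndex I (conjComb m₁ m₂) G
        = ∑ p : Finset X × Finset X,
            if GaloisStable I (↑(p.1 ∩ p.2) : Set X) G then m₁ p.1 * m₂ p.2 else 0 := by
          unfold stabilityIndex conjComb
          exact stabIdx_double I m₁ m₂ G (· ∩ ·)
      _ ≤ ∑ p : Finset X × Finset X,
            if GaloisStable I (↑p.2 : Set X) G then m₁ p.1 * m₂ p.2 else 0 := by
          apply Finset.sum_le_sum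
          intro p _
          split_ifs with h h' h'
          · exact le_refl _
          · exact absurd (galoisStable_mono I (by simp [Set.inter_subset_right]) h) h'
          · exact mul_nonneg (h₁.1 _) (h₂.1 _)
          · exact le_refl _
      _ = stabilityIndex I m₂ G := stabIdx_factor₂ I m₁ m₂ h₁ G
  have hdisjd : ∀ G : Set A, stabilityIndex I (disjComb m₁ m₂) G
      = ∑ p : Finset X × Finset X,
          if GaloisStable I (↑(p.1 ∪ p.2) : Set X) G then m₁ p.1 * m₂ p.2 else 0 := by
    intro G
    unfold stabilityIndex disjComb
    exact stabIdx_double I m₁ m₂ G (· ∪ ·)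
  have hdisj₁ : ∀ G : Set A,
      stabilityIndex I m₁ G ≤ stabilityIndex I (disjComb m₁ m₂) G := by
    intro G
    rw [hdisjd G, ← stabIdx_factor₁ I m₁ m₂ h₂ G]
    apply Finset.sum_le_sum
    intro p _
    split_ifs with h h' h'
    · exact le_refl _
    · exact absurd (galoisStable_mono I (by simp [Set.subset_union_left]) h) h'
    · exact mul_nonneg (h₁.1 _) (h₂.1 _)
    · exact le_refl _
  have hdisj₂ : ∀ G : Set A,
      stabilityIndex I m₂ G ≤ stabilityIndex I (disjComb m₁ m₂) G := by
    intro G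
    rw [hdisjd G, ← stabIdx_factor₂ I m₁ m₂ h₁ G]
    apply Finset.sum_le_sum
    intro p _
    split_ifs with h h' h'
    · exact le_refl _
    · exact absurd (galoisStable_mono I (by simp [Set.subset_union_right]) h) h'
    · exact mul_nonneg (h₁.1 _) (h₂.1 _)
    · exact le_refl _
  constructor
  · rintro ⟨G, hρ, hB⟩
    exact ⟨⟨G, le_trans hρ (hconj₁ G), hB⟩, ⟨G, le_trans hρ (hconj₂ G), hB⟩⟩
  · rintro (⟨G, hρ, hB⟩ | ⟨G, hρ, hB⟩)
    · exact ⟨G, le_trans hρ (hdisj₁ G), hB⟩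
    · exact ⟨G, le_trans hρ (hdisj₂ G), hB⟩
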